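/- Let f : ℝ³ → ℝ be three times continuously differentiable and let x₀ ∈ ℝ³ satisfy f(x₀) = 0 and ∇f(x₀) ≠ 0. Then there exist δ > 0 and C > 0 such that for all z₁, z₂ in the open ball of radius δ around x₀ with f(z₁) = f(z₂) = 0, one has ∇f((z₁ + z₂)/2) ≠ 0 and |⟨(z₁ − z₂)/2, n̂((z₁ + z₂)/2)⟩| ≤ C ‖(z₁ − z₂)/2‖³; that is, the relative vector of two nearby points on the level surface {f = 0} is tangent to the surface at their midpoint up to a cubic error. -/

import Mathlib

open Metric Set InnerProductSpace

/-- The unit normal field `n̂(x) = ∇f(x)/‖∇f(x)‖` of level surfaces of `f`. -/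
noncomputable def nhat (f : EuclideanSpace ℝ (Fin 3) → ℝ)
    (x : EuclideanSpace ℝ (Fin 3)) : EuclideanSpace ℝ (Fin 3) :=
  ‖gradient f x‖⁻¹ • gradient f x

set_option maxHeartbeats 1000000 in
/-- The relative vector of two nearby points on a level surface `{f = 0}` is tangent to
the surface at their midpoint up to a cubic error. -/
theorem relative_vector_almost_tangent
    (f : EuclideanSpace ℝ (Fin 3) → ℝ) (hf : ContDiff ℝ 3 f)
    (x₀ : EuclideanSpace ℝ (Fin 3)) (hx₀0 : f x₀ = 0) (hx₀ : gradient f x₀ ≠ 0) :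
    ∃ δ > (0:ℝ), ∃ C > (0:ℝ),
      ∀ z₁ z₂ : EuclideanSpace ℝ (Fin 3),
        z₁ ∈ Metric.ball x₀ δ → z₂ ∈ Metric.ball x₀ δ → f z₁ = 0 → f z₂ = 0 →
          gradient f ((2:ℝ)⁻¹ • (z₁ + z₂)) ≠ 0 ∧
          |(inner ℝ ((2:ℝ)⁻¹ • (z₁ - z₂)) (nhat f ((2:ℝ)⁻¹ • (z₁ + z₂))) : ℝ)|
            ≤ C * ‖(2:ℝ)⁻¹ • (z₁ - z₂)‖ ^ 3 := by
  have hfd : Differentiable ℝ f := hf.differentiable (by norm_num)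
  have hf2 : ContDiff ℝ 2 (fderiv ℝ f) := hf.fderiv_right (by norm_num)
  have hf2d : Differentiable ℝ (fderiv ℝ f) := hf2.differentiable (by norm_num)
  have hf1 : ContDiff ℝ 1 (fderiv ℝ (fderiv ℝ f)) := hf2.fderiv_right (by norm_num)
  have hgradcont : Continuous (gradient f) :=
    (InnerProductSpace.toDual ℝ (EuclideanSpace ℝ (Fin 3))).symm.continuous.comp hf2.continuous
  set g₀ : ℝ := ‖gradient f x₀‖ with hg₀
  have hg₀pos : 0 < g₀ := norm_pos_iff.mpr hx₀
  have hopen : IsOpen {x : EuclideanSpace ℝ (Fin 3) | g₀ / 2 < ‖gradient f x‖} :=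
    isOpen_lt continuous_const hgradcont.norm
  obtain ⟨δ₁, hδ₁pos, hδ₁⟩ := Metric.isOpen_iff.mp hopen x₀ (by simp only [mem_setOf_eq]; linarith)
  obtain ⟨K, hK⟩ := (isCompact_closedBall x₀ 1).exists_bound_of_continuousOn
    ((hf1.continuous_fderiv one_ne_zero).continuousOn)
  have hK0 : 0 ≤ K := le_trans (norm_nonneg _) (hK x₀ (mem_closedBall_self zero_le_one))
  have hHess : ∀ x ∈ closedBall x₀ 1, ∀ y ∈ closedBall x₀ 1,
      ‖fderiv ℝ (fderiv ℝ f) y - fderiv ℝ (fderiv ℝ f) x‖ ≤ K * ‖y - x‖ := fun x hx y hy =>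
    (convex_closedBall x₀ 1).norm_image_sub_le_of_norm_fderiv_le
      (fun z _ => (hf1.differentiable one_ne_zero).differentiableAt) hK hx hy
  set δ : ℝ := min δ₁ 1 with hδdef
  have hδpos : 0 < δ := lt_min hδ₁pos zero_lt_one
  refine ⟨δ, hδpos, (K + 1) * 2 / g₀, by positivity, fun z₁ z₂ hz₁ hz₂ hfz₁ hfz₂ => ?_⟩
  set m : EuclideanSpace ℝ (Fin 3) := (2:ℝ)⁻¹ • (z₁ + z₂) with hm
  set v : EuclideanSpace ℝ (Fin 3) := (2:ℝ)⁻¹ • (z₁ - z₂) with hv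
  have hball : ∀ t ∈ Icc (0:ℝ) 1, m + t • v ∈ ball x₀ δ ∧ m - t • v ∈ ball x₀ δ := by
    intro t ht
    constructor
    · have := (convex_ball x₀ δ) hz₁ hz₂ (by linarith [ht.1, ht.2] : (0:ℝ) ≤ (1+t)/2)
        (by linarith [ht.1, ht.2] : (0:ℝ) ≤ (1-t)/2) (by ring)
      convert this using 1
      rw [hm, hv]; module
    · have := (convex_ball x₀ δ) hz₁ hz₂ (by linarith [ht.1, ht.2] : (0:ℝ) ≤ (1-t)/2)
        (by linarith [ht.1, ht.2] : (0:ℝ) ≤ (1+t)/2) (by ring)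
      convert this using 1
      rw [hm, hv]; module
  have hsub1 : ball x₀ δ ⊆ closedBall x₀ 1 :=
    ball_subset_closedBall.trans (closedBall_subset_closedBall (min_le_right _ _))
  have hmb : m ∈ ball x₀ δ := by simpa using (hball 0 ⟨le_rfl, zero_le_one⟩).1
  have hgm : g₀ / 2 < ‖gradient f m‖ := hδ₁ (ball_subset_ball (min_le_left _ _) hmb)
  have hgm0 : gradient f m ≠ 0 := by
    intro h; rw [h, norm_zero] at hgm; linarith
  refine ⟨hgm0, ?_⟩
  -- Step A: second difference of the first derivative is quadratically small
  have stepA : ∀ t ∈ Icc (0:ℝ) 1,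
      ‖fderiv ℝ f (m + t • v) + fderiv ℝ f (m - t • v) - (2:ℝ) • fderiv ℝ f m‖
        ≤ 2 * K * ‖v‖ ^ 2 * t := by
    set A : ℝ → (EuclideanSpace ℝ (Fin 3) →L[ℝ] ℝ) := fun s =>
      fderiv ℝ f (m + s • v) + fderiv ℝ f (m - s • v) - (2:ℝ) • fderiv ℝ f m with hA
    have hderiv : ∀ s ∈ Icc (0:ℝ) 1, HasDerivWithinAt A
        (fderiv ℝ (fderiv ℝ f) (m + s • v) v - fderiv ℝ (fderiv ℝ f) (m - s • v) v)
        (Icc 0 1) s := by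
      intro s _
      have hc1 : HasDerivAt (fun u : ℝ => m + u • v) v s := by
        simpa using ((hasDerivAt_id s).smul_const v).const_add m
      have hc2 : HasDerivAt (fun u : ℝ => m - u • v) (-v) s := by
        simpa using ((hasDerivAt_id s).smul_const v).const_sub m
      have h1 : HasDerivAt (fun u : ℝ => fderiv ℝ f (m + u • v))
          (fderiv ℝ (fderiv ℝ f) (m + s • v) v) s :=
        (hf2d.differentiableAt.hasFDerivAt).comp_hasDerivAt s hc1
      have h2 : HasDerivAt (fun u : ℝ => fderiv ℝ f (m - u • v))
          (fderiv ℝ (fderiv ℝ f) (m - s • v) (-v)) s :=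
        (hf2d.differentiableAt.hasFDerivAt).comp_hasDerivAt s hc2
      have := ((h1.add h2).sub_const ((2:ℝ) • fderiv ℝ f m))
      exact (this.hasDerivWithinAt (s := Icc 0 1)).congr_deriv (by rw [map_neg, ← sub_eq_add_neg])
    have hbound : ∀ s ∈ Ico (0:ℝ) 1,
        ‖fderiv ℝ (fderiv ℝ f) (m + s • v) v - fderiv ℝ (fderiv ℝ f) (m - s • v) v‖
          ≤ 2 * K * ‖v‖ ^ 2 := by
      intro s hs
      have hs' : s ∈ Icc (0:ℝ) 1 := ⟨hs.1, hs.2.le⟩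
      have hmem := hball s hs'
      have h1 : ‖fderiv ℝ (fderiv ℝ f) (m + s • v) v - fderiv ℝ (fderiv ℝ f) (m - s • v) v‖
          ≤ ‖fderiv ℝ (fderiv ℝ f) (m + s • v) - fderiv ℝ (fderiv ℝ f) (m - s • v)‖ * ‖v‖ := by
        rw [← ContinuousLinearMap.sub_apply]
        exact (fderiv ℝ (fderiv ℝ f) (m + s • v) - fderiv ℝ (fderiv ℝ f) (m - s • v)).le_opNorm v
      have h2 : ‖fderiv ℝ (fderiv ℝ f) (m + s • v) - fderiv ℝ (fderiv ℝ f) (m - s • v)‖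
          ≤ K * ‖(m + s • v) - (m - s • v)‖ :=
        hHess _ (hsub1 hmem.2) _ (hsub1 hmem.1)
      have h3 : ‖(m + s • v) - (m - s • v)‖ = 2 * s * ‖v‖ := by
        have : (m + s • v) - (m - s • v) = (2 * s) • v := by module
        rw [this, norm_smul]
        simp [abs_of_nonneg, hs.1, abs_of_nonneg (by linarith [hs.1] : (0:ℝ) ≤ 2 * s)]
      calc ‖fderiv ℝ (fderiv ℝ f) (m + s • v) v - fderiv ℝ (fderiv ℝ f) (m - s • v) v‖
          ≤ (K * (2 * s * ‖v‖)) * ‖v‖ := h1.trans (by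
            apply mul_le_mul_of_nonneg_right _ (norm_nonneg v)
            exact h2.trans (le_of_eq (by rw [h3])))
        _ = (2 * K * ‖v‖ ^ 2) * s := by ring
        _ ≤ 2 * K * ‖v‖ ^ 2 := mul_le_of_le_one_right (by positivity) hs.2.le
    intro t ht
    have := norm_image_sub_le_of_norm_deriv_le_segment' hderiv hbound t ht
    have hA0 : A 0 = 0 := by
      simp [hA, two_smul]
    rw [hA0, sub_zero] at this
    simpa using this
  -- Step B: the symmetric difference of f is cubically small
  have stepB : |fderiv ℝ f m v| ≤ K * ‖v‖ ^ 3 := by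
    set φ : ℝ → ℝ := fun t => f (m + t • v) - f (m - t • v) - (2 * t) * fderiv ℝ f m v with hφ
    have hderiv : ∀ t ∈ Icc (0:ℝ) 1, HasDerivWithinAt φ
        ((fderiv ℝ f (m + t • v) + fderiv ℝ f (m - t • v) - (2:ℝ) • fderiv ℝ f m) v)
        (Icc 0 1) t := by
      intro t _
      have hc1 : HasDerivAt (fun u : ℝ => m + u • v) v t := by
        simpa using ((hasDerivAt_id t).smul_const v).const_add m
      have hc2 : HasDerivAt (fun u : ℝ => m - u • v) (-v) t := by
        simpa using ((hasDerivAt_id t).smul_const v).const_sub m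
      have h1 : HasDerivAt (fun u : ℝ => f (m + u • v)) (fderiv ℝ f (m + t • v) v) t :=
        (hfd.differentiableAt.hasFDerivAt).comp_hasDerivAt t hc1
      have h2 : HasDerivAt (fun u : ℝ => f (m - u • v)) (fderiv ℝ f (m - t • v) (-v)) t :=
        (hfd.differentiableAt.hasFDerivAt).comp_hasDerivAt t hc2
      have h3 : HasDerivAt (fun u : ℝ => (2 * u) * fderiv ℝ f m v) (2 * fderiv ℝ f m v) t := by
        simpa using (((hasDerivAt_id t).const_mul (2:ℝ)).mul_const (fderiv ℝ f m v))
      have := ((h1.sub h2).sub h3).hasDerivWithinAt (s := Icc (0:ℝ) 1)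
      simp only [ContinuousLinearMap.sub_apply, ContinuousLinearMap.add_apply,
        ContinuousLinearMap.smul_apply, map_neg, smul_eq_mul]
      refine this.congr_deriv ?_
      simp only [map_neg]
      ring
    have hbound : ∀ t ∈ Ico (0:ℝ) 1,
        ‖(fderiv ℝ f (m + t • v) + fderiv ℝ f (m - t • v) - (2:ℝ) • fderiv ℝ f m) v‖
          ≤ 2 * K * ‖v‖ ^ 3 := by
      intro t ht
      have h1 := (fderiv ℝ f (m + t • v) + fderiv ℝ f (m - t • v)
          - (2:ℝ) • fderiv ℝ f m).le_opNorm v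
      have h2 := stepA t ⟨ht.1, ht.2.le⟩
      have h3 : 2 * K * ‖v‖ ^ 2 * t ≤ 2 * K * ‖v‖ ^ 2 :=
        mul_le_of_le_one_right (by positivity) ht.2.le
      calc ‖(fderiv ℝ f (m + t • v) + fderiv ℝ f (m - t • v) - (2:ℝ) • fderiv ℝ f m) v‖
          ≤ (2 * K * ‖v‖ ^ 2) * ‖v‖ :=
            h1.trans (mul_le_mul_of_nonneg_right (h2.trans h3) (norm_nonneg v))
        _ = 2 * K * ‖v‖ ^ 3 := by ring
    have hmv : m + v = z₁ := by rw [hm, hv]; module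
    have hmv' : m - v = z₂ := by rw [hm, hv]; module
    have := norm_image_sub_le_of_norm_deriv_le_segment' hderiv hbound 1
      ⟨zero_le_one, le_rfl⟩
    have hφ0 : φ 0 = 0 := by simp [hφ]
    have hφ1 : φ 1 = -(2 * fderiv ℝ f m v) := by
      simp [hφ, one_smul, hmv, hmv', hfz₁, hfz₂]
    rw [hφ0, sub_zero, hφ1] at this
    simp only [sub_zero, mul_one, Real.norm_eq_abs, abs_neg] at this
    have habs : |2 * fderiv ℝ f m v| = 2 * |fderiv ℝ f m v| := by
      rw [abs_mul]; norm_num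
    rw [habs] at this
    nlinarith [this]
  -- conclude
  have hinner : (inner ℝ (gradient f m) v : ℝ) = fderiv ℝ f m v :=
    InnerProductSpace.toDual_symm_apply
  have hnhat : (inner ℝ v (nhat f m) : ℝ) = ‖gradient f m‖⁻¹ * fderiv ℝ f m v := by
    rw [nhat, real_inner_smul_right, real_inner_comm, hinner]
  rw [hnhat, abs_mul, abs_inv, abs_norm]
  have hle : ‖gradient f m‖⁻¹ ≤ 2 / g₀ := by
    rw [inv_le_iff_one_le_mul₀ (by linarith : (0:ℝ) < ‖gradient f m‖)]
    rw [div_mul_eq_mul_div, le_div_iff₀ hg₀pos]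
    nlinarith
  calc ‖gradient f m‖⁻¹ * |fderiv ℝ f m v| ≤ (2 / g₀) * (K * ‖v‖ ^ 3) := by
        apply mul_le_mul hle stepB (abs_nonneg _) (by positivity)
    _ = K * 2 / g₀ * ‖v‖ ^ 3 := by ring
    _ ≤ (K + 1) * 2 / g₀ * ‖v‖ ^ 3 := by
        gcongr
        linarith
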